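/- If a linear map U : H ⊗ H → H ⊗ H preserves inner products and satisfies U(ψ ⊗ e) = ψ ⊗ ψ for two particular unit vectors ψ = u and ψ = v, then ⟨u,v⟩ ∈ {0} ∪ {z : z = 1}; in particular no inner-product-preserving map can clone two distinct non-orthogonal unit vectors. -/
import Mathlib


/-- The tensor product `u ⊗ v` of `u, v ∈ ℂⁿ`, as a vector in `ℂⁿ ⊗ ℂⁿ ≅ ℂ^(n×n)`. -/
def tensorVec {n : ℕ} (u v : Fin n → ℂ) : Fin n × Fin n → ℂ := fun p => u p.1 * v p.2

lemma tensor_inner {n : ℕ} (a b c d : Fin n → ℂ) :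
    ∑ p : Fin n × Fin n, (starRingEnd ℂ) (tensorVec a b p) * tensorVec c d p
      = (∑ i, (starRingEnd ℂ) (a i) * c i) * (∑ i, (starRingEnd ℂ) (b i) * d i) := by
  rw [Finset.sum_mul_sum, Fintype.sum_prod_type]
  simp [tensorVec, map_mul]
  congr 1; ext i; congr 1; ext j; ring

/-- If a linear map `U : H ⊗ H → H ⊗ H` preserves inner products and clones
two particular unit vectors `u` and `v` (i.e. `U (u ⊗ e) = u ⊗ u` and `U (v ⊗ e) = v ⊗ v`
for a fixed unit blank vector `e`), then `⟨u,v⟩ ∈ {0, 1}`; in particular no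
inner-product-preserving map can clone two distinct non-orthogonal unit vectors. -/
theorem cloning_two_states_forces_overlap_zero_or_one {n : ℕ}
    (U : (Fin n × Fin n → ℂ) →ₗ[ℂ] (Fin n × Fin n → ℂ))
    (hU : ∀ x y : Fin n × Fin n → ℂ,
      ∑ p, (starRingEnd ℂ) (U x p) * U y p = ∑ p, (starRingEnd ℂ) (x p) * y p)
    (e u v : Fin n → ℂ)
    (he : ∑ i, (starRingEnd ℂ) (e i) * e i = 1)
    (hu : ∑ i, (starRingEnd ℂ) (u i) * u i = 1)
    (hv : ∑ i, (starRingEnd ℂ) (v i) * v i = 1)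
    (hcu : U (tensorVec u e) = tensorVec u u)
    (hcv : U (tensorVec v e) = tensorVec v v) :
    (∑ i, (starRingEnd ℂ) (u i) * v i = 0) ∨ (∑ i, (starRingEnd ℂ) (u i) * v i = 1) := by
  have h := hU (tensorVec u e) (tensorVec v e)
  rw [hcu, hcv, tensor_inner, tensor_inner, he, mul_one] at h
  set c := ∑ i, (starRingEnd ℂ) (u i) * v i
  have : c * (c - 1) = 0 := by rw [mul_sub, mul_one, h, sub_self]
  rcases mul_eq_zero.mp this with h0 | h1
  · exact Or.inl h0
  · exact Or.inr (sub_eq_zero.mp h1)
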